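/- The second-order tail moment of an NMVM variable S satisfies E[S² | S > s_α] = μ² + c*(1−α*)/(1−α) · (σ² + 2μγ + σ²(s_α + μ) h_{S*}(s_α)) + c**(1−α**)/(1−α) · (γ² + γσ² h_{S**}(s_α)). -/

import Mathlib

open MeasureTheory Set
open Filter Topology

/-- Density of the normal distribution with mean `m` and variance `v`. -/
noncomputable def ndens (m v x : ℝ) : ℝ :=
  (Real.sqrt (2 * Real.pi * v))⁻¹ * Real.exp (-(x - m) ^ 2 / (2 * v))

/-- Density of the univariate NMVM distribution with parameters `μ, γ, σ` and
mixing density `q` on `(0, ∞)`. -/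
noncomputable def mixdens (μ γ σ : ℝ) (q : ℝ → ℝ) (s : ℝ) : ℝ :=
  ∫ θ in Set.Ioi (0:ℝ), ndens (μ + θ * γ) (θ * σ ^ 2) s * q θ

/-- Survival function of the univariate NMVM distribution. -/
noncomputable def surv (μ γ σ : ℝ) (q : ℝ → ℝ) (c : ℝ) : ℝ :=
  ∫ s in Set.Ioi c, mixdens μ γ σ q s

/-- `k`-th tail moment `E[S^k | S > c]` of the univariate NMVM distribution. -/
noncomputable def tailmom (μ γ σ : ℝ) (q : ℝ → ℝ) (k : ℕ) (c : ℝ) : ℝ :=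
  (surv μ γ σ q c)⁻¹ * ∫ s in Set.Ioi c, s ^ k * mixdens μ γ σ q s

lemma ndens_nonneg (m v x : ℝ) : 0 ≤ ndens m v x := by
  unfold ndens; positivity

lemma ndens_le {v : ℝ} (hv : 0 < v) (m x : ℝ) :
    ndens m v x ≤ (Real.sqrt (2 * Real.pi * v))⁻¹ := by
  unfold ndens
  have h1 : Real.exp (-(x - m) ^ 2 / (2 * v)) ≤ 1 := by
    apply Real.exp_le_one_iff.mpr
    exact div_nonpos_of_nonpos_of_nonneg (neg_nonpos.mpr (sq_nonneg _)) (by positivity)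
  calc (Real.sqrt (2 * Real.pi * v))⁻¹ * Real.exp (-(x - m) ^ 2 / (2 * v))
      ≤ (Real.sqrt (2 * Real.pi * v))⁻¹ * 1 := by
        apply mul_le_mul_of_nonneg_left h1 (by positivity)
    _ = (Real.sqrt (2 * Real.pi * v))⁻¹ := mul_one _

lemma measurable_ndens_pair (μ γ σ : ℝ) :
    Measurable fun q : ℝ × ℝ => ndens (μ + q.1 * γ) (q.1 * σ ^ 2) q.2 := by
  unfold ndens
  apply Measurable.mul
  · exact (Real.continuous_sqrt.measurable.comp (by fun_prop)).inv
  · exact Real.measurable_exp.comp (Measurable.div (by fun_prop) (by fun_prop))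

lemma ndens_exp_form (m : ℝ) {v : ℝ} (x : ℝ) :
    ndens m v x = (Real.sqrt (2 * Real.pi * v))⁻¹ * Real.exp (-(2 * v)⁻¹ * (x - m) ^ 2) := by
  unfold ndens
  congr 1
  congr 1
  ring

lemma integrable_pow_mul_gauss {b : ℝ} (hb : 0 < b) (n : ℕ) :
    Integrable fun x : ℝ => x ^ n * Real.exp (-b * x ^ 2) := by
  have hint : Integrable fun x : ℝ =>
      (n.factorial * Real.exp (1 / (2 * b))) * Real.exp (-(b / 2) * x ^ 2) :=
    (integrable_exp_neg_mul_sq (half_pos hb)).const_mul _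
  have hc : Continuous fun x : ℝ => x ^ n * Real.exp (-b * x ^ 2) := by continuity
  refine hint.mono' hc.aestronglyMeasurable (ae_of_all _ fun x => ?_)
  have hfact : |x| ^ n ≤ n.factorial * Real.exp |x| := by
    have h := Real.sum_le_exp_of_nonneg (abs_nonneg x) (n + 1)
    have h2 : |x| ^ n / n.factorial ≤ ∑ i ∈ Finset.range (n + 1), |x| ^ i / i.factorial :=
      Finset.single_le_sum (f := fun i => |x| ^ i / i.factorial)
        (fun i _ => by positivity) (Finset.self_mem_range_succ n)
    have h3 : |x| ^ n / n.factorial ≤ Real.exp |x| := h2.trans h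
    have hn : (0:ℝ) < n.factorial := by exact_mod_cast n.factorial_pos
    calc |x| ^ n = (|x| ^ n / n.factorial) * n.factorial := by field_simp
      _ ≤ Real.exp |x| * n.factorial := mul_le_mul_of_nonneg_right h3 hn.le
      _ = n.factorial * Real.exp |x| := mul_comm _ _
  have hexp : Real.exp |x| * Real.exp (-b * x ^ 2)
      ≤ Real.exp (1 / (2 * b)) * Real.exp (-(b / 2) * x ^ 2) := by
    rw [← Real.exp_add, ← Real.exp_add]
    apply Real.exp_le_exp.mpr
    have key : 2 * b * |x| ≤ 1 + (b * |x|) ^ 2 := by nlinarith [sq_nonneg (b * |x| - 1)]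
    have h3 : (1 / (2 * b) + (b / 2) * x ^ 2) * (2 * b) = 1 + (b * |x|) ^ 2 := by
      have : (b * |x|) ^ 2 = b ^ 2 * x ^ 2 := by rw [mul_pow, sq_abs]
      rw [this]; field_simp
    have h4 : |x| * (2 * b) ≤ (1 / (2 * b) + (b / 2) * x ^ 2) * (2 * b) := by
      rw [h3]; linarith
    have h5 : |x| ≤ 1 / (2 * b) + (b / 2) * x ^ 2 :=
      le_of_mul_le_mul_right h4 (by positivity)
    linarith
  have hnorm : ‖x ^ n * Real.exp (-b * x ^ 2)‖ = |x| ^ n * Real.exp (-b * x ^ 2) := by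
    rw [Real.norm_eq_abs, abs_mul, abs_pow, abs_of_pos (Real.exp_pos _)]
  rw [hnorm]
  calc |x| ^ n * Real.exp (-b * x ^ 2)
      ≤ (n.factorial * Real.exp |x|) * Real.exp (-b * x ^ 2) :=
        mul_le_mul_of_nonneg_right hfact (Real.exp_pos _).le
    _ = n.factorial * (Real.exp |x| * Real.exp (-b * x ^ 2)) := by ring
    _ ≤ n.factorial * (Real.exp (1 / (2 * b)) * Real.exp (-(b / 2) * x ^ 2)) := by
        have hn : (0:ℝ) ≤ n.factorial := by positivity
        exact mul_le_mul_of_nonneg_left hexp hn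
    _ = n.factorial * Real.exp (1 / (2 * b)) * Real.exp (-(b / 2) * x ^ 2) := by ring

lemma tendsto_mul_gauss {b : ℝ} (hb : 0 < b) :
    Tendsto (fun x : ℝ => x * Real.exp (-b * x ^ 2)) atTop (𝓝 0) := by
  have h1 : Tendsto (fun t : ℝ => t * Real.exp (-t)) atTop (𝓝 0) := by
    simpa using Real.tendsto_pow_mul_exp_neg_atTop_nhds_zero 1
  have h2 : Tendsto (fun x : ℝ => b * x) atTop atTop :=
    Tendsto.const_mul_atTop hb tendsto_id
  have h3 : Tendsto (fun x : ℝ => (b * x) * Real.exp (-(b * x))) atTop (𝓝 0) := h1.comp h2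
  have h4 : Tendsto (fun x : ℝ => b⁻¹ * ((b * x) * Real.exp (-(b * x)))) atTop (𝓝 0) := by
    simpa using h3.const_mul b⁻¹
  have h5 : Tendsto (fun x : ℝ => x * Real.exp (-(b * x))) atTop (𝓝 0) := by
    have : (fun x : ℝ => x * Real.exp (-(b * x)))
        = fun x : ℝ => b⁻¹ * ((b * x) * Real.exp (-(b * x))) := by
      funext x
      field_simp
    rw [this]; exact h4
  apply squeeze_zero_norm' _ h5
  filter_upwards [eventually_ge_atTop (1:ℝ)] with x hx
  have hx0 : (0:ℝ) ≤ x := le_trans zero_le_one hx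
  rw [Real.norm_eq_abs, abs_mul, abs_of_nonneg hx0, abs_of_pos (Real.exp_pos _)]
  have hxx : b * x ≤ b * x ^ 2 := mul_le_mul_of_nonneg_left (by nlinarith) hb.le
  have : -b * x ^ 2 ≤ -(b * x) := by linarith
  exact mul_le_mul_of_nonneg_left (Real.exp_le_exp.mpr this) hx0

lemma integrable_pow_mul_ndens {v : ℝ} (hv : 0 < v) (m : ℝ) (n : ℕ) :
    Integrable fun x : ℝ => x ^ n * ndens m v x := by
  have hb : 0 < (2 * v)⁻¹ := by positivity
  have h1 : Integrable fun y : ℝ => (y + m) ^ n * Real.exp (-(2 * v)⁻¹ * y ^ 2) := by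
    have heq : (fun y : ℝ => (y + m) ^ n * Real.exp (-(2 * v)⁻¹ * y ^ 2))
        = fun y : ℝ => ∑ i ∈ Finset.range (n + 1),
            (y ^ i * Real.exp (-(2 * v)⁻¹ * y ^ 2)) * (m ^ (n - i) * (n.choose i)) := by
      funext y
      rw [add_pow, Finset.sum_mul]
      refine Finset.sum_congr rfl fun i _ => by ring
    rw [heq]
    exact integrable_finset_sum _ fun i _ => (integrable_pow_mul_gauss hb i).mul_const _
  have h2 : Integrable fun x : ℝ => x ^ n * Real.exp (-(2 * v)⁻¹ * (x - m) ^ 2) := by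
    have h3 := h1.comp_sub_right m
    simpa using h3
  have heq2 : (fun x : ℝ => x ^ n * ndens m v x)
      = fun x : ℝ => (Real.sqrt (2 * Real.pi * v))⁻¹
          * (x ^ n * Real.exp (-(2 * v)⁻¹ * (x - m) ^ 2)) := by
    funext x
    rw [ndens_exp_form m x]
    ring
  rw [heq2]
  exact h2.const_mul _

lemma integrable_ndens {v : ℝ} (hv : 0 < v) (m : ℝ) : Integrable (ndens m v) := by
  simpa using integrable_pow_mul_ndens hv m 0

lemma integral_ndens_eq_one {v : ℝ} (hv : 0 < v) (m : ℝ) : ∫ x, ndens m v x = 1 := by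
  have hveq : ((v.toNNReal : ℝ)) = v := Real.coe_toNNReal _ hv.le
  have h : ndens m v = ProbabilityTheory.gaussianPDFReal m v.toNNReal := by
    funext x
    simp only [ndens, ProbabilityTheory.gaussianPDFReal, hveq]
  rw [h]
  exact ProbabilityTheory.integral_gaussianPDFReal_eq_one m
    (ne_of_gt (Real.toNNReal_pos.mpr hv))

lemma tendsto_sub_atTop (m : ℝ) : Tendsto (fun x : ℝ => x - m) atTop atTop := by
  simpa [sub_eq_add_neg] using tendsto_atTop_add_const_right atTop (-m) (tendsto_id (α := ℝ))

lemma tendsto_ndens {v : ℝ} (hv : 0 < v) (m : ℝ) :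
    Tendsto (fun x => ndens m v x) atTop (𝓝 0) := by
  have h1 := tendsto_sub_atTop m
  have h2 : Tendsto (fun x : ℝ => (x - m) ^ 2) atTop atTop := by
    apply tendsto_atTop_mono' atTop _ h1
    filter_upwards [eventually_ge_atTop (m + 1)] with x hx
    nlinarith
  have h3 : Tendsto (fun x : ℝ => -(x - m) ^ 2 / (2 * v)) atTop atBot := by
    apply Tendsto.atBot_div_const (by positivity)
    exact tendsto_neg_atTop_atBot.comp h2
  have h4 : Tendsto (fun x : ℝ => Real.exp (-(x - m) ^ 2 / (2 * v))) atTop (𝓝 0) :=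
    Real.tendsto_exp_atBot.comp h3
  have h5 := h4.const_mul ((Real.sqrt (2 * Real.pi * v))⁻¹)
  simpa [ndens] using h5

lemma tendsto_sub_mul_ndens {v : ℝ} (hv : 0 < v) (m : ℝ) :
    Tendsto (fun x => (x - m) * ndens m v x) atTop (𝓝 0) := by
  have hb : 0 < (2 * v)⁻¹ := by positivity
  have h1 := tendsto_mul_gauss hb
  have h2 : Tendsto (fun x : ℝ => (x - m) * Real.exp (-(2 * v)⁻¹ * (x - m) ^ 2))
      atTop (𝓝 0) := h1.comp (tendsto_sub_atTop m)
  have h3 := h2.const_mul ((Real.sqrt (2 * Real.pi * v))⁻¹)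
  have heq : (fun x : ℝ => (x - m) * ndens m v x)
      = fun x : ℝ => (Real.sqrt (2 * Real.pi * v))⁻¹
          * ((x - m) * Real.exp (-(2 * v)⁻¹ * (x - m) ^ 2)) := by
    funext x
    rw [ndens_exp_form m x]
    ring
  rw [heq]
  simpa using h3

lemma hasDerivAt_ndens {v : ℝ} (hv : 0 < v) (m x : ℝ) :
    HasDerivAt (ndens m v) (-((x - m) / v) * ndens m v x) x := by
  have h1 : HasDerivAt (fun y : ℝ => -(y - m) ^ 2 / (2 * v)) (-(2 * (x - m)) / (2 * v)) x := by
    have h0 := ((hasDerivAt_id x).sub_const m).pow 2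
    have h2 := h0.neg.div_const (2 * v)
    refine h2.congr_deriv ?_
    simp only [id_eq]
    ring
  have h3 := (h1.exp).const_mul ((Real.sqrt (2 * Real.pi * v))⁻¹)
  have heq : -((x - m) / v) * ndens m v x
      = (Real.sqrt (2 * Real.pi * v))⁻¹
          * (Real.exp (-(x - m) ^ 2 / (2 * v)) * (-(2 * (x - m)) / (2 * v))) := by
    unfold ndens
    field_simp
  rw [heq]
  exact h3

lemma tail0_nonneg (m v c : ℝ) : 0 ≤ ∫ x in Ioi c, ndens m v x :=
  setIntegral_nonneg measurableSet_Ioi fun x _ => ndens_nonneg m v x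

lemma tail0_le_one {v : ℝ} (hv : 0 < v) (m c : ℝ) : (∫ x in Ioi c, ndens m v x) ≤ 1 := by
  calc (∫ x in Ioi c, ndens m v x) ≤ ∫ x, ndens m v x :=
        setIntegral_le_integral (integrable_ndens hv m) (ae_of_all _ fun x => ndens_nonneg m v x)
    _ = 1 := integral_ndens_eq_one hv m

lemma tail2_eq {v : ℝ} (hv : 0 < v) (m c : ℝ) :
    ∫ x in Ioi c, x ^ 2 * ndens m v x
      = (m ^ 2 + v) * (∫ x in Ioi c, ndens m v x) + v * (c + m) * ndens m v c := by
  have hd : ∀ x ∈ Ici c, HasDerivAt (fun y => -(v * ((y + m) * ndens m v y)))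
      ((x ^ 2 - m ^ 2 - v) * ndens m v x) x := by
    intro x _
    have h1 := ((hasDerivAt_id x).add_const m).mul (hasDerivAt_ndens hv m x)
    have h2 := (h1.const_mul v).neg
    refine h2.congr_deriv ?_
    simp only [id_eq]
    field_simp
    ring
  have int2 := integrable_pow_mul_ndens hv m 2
  have int0 := integrable_ndens hv m
  have hintfull : Integrable fun x : ℝ => (x ^ 2 - m ^ 2 - v) * ndens m v x := by
    have h := int2.sub (int0.const_mul (m ^ 2 + v))
    refine h.congr (ae_of_all _ fun x => ?_)
    simp only [Pi.sub_apply]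
    ring
  have hint : IntegrableOn (fun x : ℝ => (x ^ 2 - m ^ 2 - v) * ndens m v x) (Ioi c) :=
    hintfull.integrableOn
  have hten : Tendsto (fun y => -(v * ((y + m) * ndens m v y))) atTop (𝓝 0) := by
    have h1 : Tendsto (fun y : ℝ => (y + m) * ndens m v y) atTop (𝓝 0) := by
      have heq : (fun y : ℝ => (y + m) * ndens m v y)
          = fun y => (y - m) * ndens m v y + (2 * m) * ndens m v y := by
        funext y; ring
      rw [heq]
      simpa using (tendsto_sub_mul_ndens hv m).add ((tendsto_ndens hv m).const_mul (2 * m))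
    simpa using (h1.const_mul v).neg
  have key := integral_Ioi_of_hasDerivAt_of_tendsto' hd hint hten
  have hsplit : ∫ x in Ioi c, (x ^ 2 - m ^ 2 - v) * ndens m v x
      = (∫ x in Ioi c, x ^ 2 * ndens m v x) - (m ^ 2 + v) * ∫ x in Ioi c, ndens m v x := by
    have h := integral_sub int2.integrableOn ((int0.const_mul (m ^ 2 + v)).integrableOn
      (s := Ioi c))
    rw [← integral_const_mul]
    rw [← h]
    refine integral_congr_ae (ae_of_all _ fun x => ?_)
    ring
  rw [hsplit] at key
  linear_combination key


lemma swap_key (μ γ σ sα : ℝ) (hσ : 0 < σ) (k : ℕ) (hk : ∀ s : ℝ, 0 ≤ s ^ k)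
    (w : ℝ → ℝ) (hw0 : ∀ θ ∈ Set.Ioi (0:ℝ), 0 ≤ w θ)
    (hwm : AEStronglyMeasurable w (volume.restrict (Set.Ioi (0:ℝ))))
    (hbound : IntegrableOn
      (fun θ => (∫ s in Set.Ioi sα, s ^ k * ndens (μ + θ * γ) (θ * σ ^ 2) s) * w θ)
      (Set.Ioi (0:ℝ))) :
    ∫ s in Set.Ioi sα, s ^ k * mixdens μ γ σ w s
      = ∫ θ in Set.Ioi (0:ℝ),
          (∫ s in Set.Ioi sα, s ^ k * ndens (μ + θ * γ) (θ * σ ^ 2) s) * w θ := by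
  let F : ℝ → ℝ → ℝ := fun θ s => (s ^ k * ndens (μ + θ * γ) (θ * σ ^ 2) s) * w θ
  have hFmeas : AEStronglyMeasurable (Function.uncurry F)
      ((volume.restrict (Set.Ioi (0:ℝ))).prod (volume.restrict (Set.Ioi sα))) := by
    apply AEStronglyMeasurable.mul
    · exact ((measurable_snd.pow_const k).mul (measurable_ndens_pair μ γ σ)).aestronglyMeasurable
    · exact hwm.comp_fst
  have hFint : Integrable (Function.uncurry F)
      ((volume.restrict (Set.Ioi (0:ℝ))).prod (volume.restrict (Set.Ioi sα))) := by
    rw [integrable_prod_iff hFmeas]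
    constructor
    · filter_upwards [ae_restrict_mem measurableSet_Ioi] with θ hθ
      have hθ' : (0:ℝ) < θ := hθ
      have hvθ : 0 < θ * σ ^ 2 := by positivity
      exact ((integrable_pow_mul_ndens hvθ (μ + θ * γ) k).mul_const (w θ)).integrableOn
    · refine hbound.congr ?_
      filter_upwards [ae_restrict_mem measurableSet_Ioi] with θ hθ
      have hnn : ∀ s, ‖F θ s‖ = F θ s := fun s =>
        Real.norm_of_nonneg (mul_nonneg (mul_nonneg (hk s) (ndens_nonneg _ _ _)) (hw0 θ hθ))
      calc (∫ s in Set.Ioi sα, s ^ k * ndens (μ + θ * γ) (θ * σ ^ 2) s) * w θ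
          = ∫ s in Set.Ioi sα, F θ s := (integral_mul_const _ _).symm
        _ = ∫ s in Set.Ioi sα, ‖Function.uncurry F (θ, s)‖ := by
            refine integral_congr_ae (ae_of_all _ fun s => ?_)
            exact (hnn s).symm
  have step1 : ∫ s in Set.Ioi sα, s ^ k * mixdens μ γ σ w s
      = ∫ s in Set.Ioi sα, ∫ θ in Set.Ioi (0:ℝ), F θ s := by
    refine integral_congr_ae (ae_of_all _ fun s => ?_)
    show s ^ k * ∫ θ in Set.Ioi (0:ℝ), ndens (μ + θ * γ) (θ * σ ^ 2) s * w θ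
        = ∫ θ in Set.Ioi (0:ℝ), F θ s
    rw [← integral_const_mul]
    refine integral_congr_ae (ae_of_all _ fun θ => ?_)
    show s ^ k * (ndens (μ + θ * γ) (θ * σ ^ 2) s * w θ)
        = (s ^ k * ndens (μ + θ * γ) (θ * σ ^ 2) s) * w θ
    ring
  have step2 := integral_integral_swap hFint
  rw [step1, ← step2]
  refine integral_congr_ae (ae_of_all _ fun θ => ?_)
  exact integral_mul_const (w θ) _

lemma measurable_ndens_theta (μ γ σ x : ℝ) :
    Measurable fun θ : ℝ => ndens (μ + θ * γ) (θ * σ ^ 2) x := by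
  unfold ndens
  apply Measurable.mul
  · exact (Real.continuous_sqrt.measurable.comp (by fun_prop)).inv
  · exact Real.measurable_exp.comp (Measurable.div (by fun_prop) (by fun_prop))

lemma ndens_theta_bound {σ : ℝ} (hσ : 0 < σ) (m x : ℝ) {θ : ℝ} (hθ : 0 < θ) :
    ndens m (θ * σ ^ 2) x ≤ ((Real.sqrt (2 * Real.pi))⁻¹ * σ⁻¹) * (Real.sqrt θ)⁻¹ := by
  have h1 := ndens_le (show 0 < θ * σ ^ 2 by positivity) m x
  have h2 : Real.sqrt (2 * Real.pi * (θ * σ ^ 2))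
      = Real.sqrt (2 * Real.pi) * Real.sqrt θ * σ := by
    rw [show 2 * Real.pi * (θ * σ ^ 2) = 2 * Real.pi * θ * σ ^ 2 by ring,
      Real.sqrt_mul (by positivity), Real.sqrt_mul (by positivity), Real.sqrt_sq hσ.le]
  rw [h2] at h1
  calc ndens m (θ * σ ^ 2) x ≤ (Real.sqrt (2 * Real.pi) * Real.sqrt θ * σ)⁻¹ := h1
    _ = ((Real.sqrt (2 * Real.pi))⁻¹ * σ⁻¹) * (Real.sqrt θ)⁻¹ := by
        rw [mul_inv, mul_inv]; ring

lemma theta_mul_sqrt_inv_le1 {θ : ℝ} (hθ : 0 < θ) : θ * (Real.sqrt θ)⁻¹ ≤ 1 + θ := by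
  have hs : 0 < Real.sqrt θ := Real.sqrt_pos.mpr hθ
  have h1 : θ * (Real.sqrt θ)⁻¹ = Real.sqrt θ := by
    field_simp
    rw [Real.sq_sqrt hθ.le]
  rw [h1]
  nlinarith [Real.sq_sqrt hθ.le, sq_nonneg (Real.sqrt θ - 1)]

lemma theta_mul_sqrt_inv_le2 {θ : ℝ} (hθ : 0 < θ) : θ ^ 2 * (Real.sqrt θ)⁻¹ ≤ θ + θ ^ 2 := by
  have hs : 0 < Real.sqrt θ := Real.sqrt_pos.mpr hθ
  have h1 : θ ^ 2 * (Real.sqrt θ)⁻¹ = θ * Real.sqrt θ := by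
    field_simp
    rw [Real.sq_sqrt hθ.le]
  rw [h1]
  have h2 : Real.sqrt θ ≤ 1 + θ := by
    nlinarith [Real.sq_sqrt hθ.le, sq_nonneg (Real.sqrt θ - 1)]
  nlinarith [mul_le_mul_of_nonneg_left h2 hθ.le]


/-- second-order tail moment of a univariate NMVM random variable. -/
theorem nmvm_second_tail_moment
    (μ γ σ α sα : ℝ) (hσ : 0 < σ) (p : ℝ → ℝ)
    (hp0 : ∀ θ, 0 ≤ p θ) (hp1 : ∫ θ in Set.Ioi (0:ℝ), p θ = 1)
    (cstar : ℝ) (hcstar : cstar = ∫ θ in Set.Ioi (0:ℝ), θ * p θ) (hcpos : 0 < cstar)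
    (css : ℝ) (hcss : css = ∫ θ in Set.Ioi (0:ℝ), θ ^ 2 * p θ) (hcsspos : 0 < css)
    (pstar : ℝ → ℝ) (hpstar : pstar = fun θ => θ * p θ / cstar)
    (pss : ℝ → ℝ) (hpss : pss = fun θ => θ ^ 2 * p θ / css)
    (hα01 : α ∈ Set.Ioo (0:ℝ) 1)
    (hquant : surv μ γ σ p sα = 1 - α)
    (αstar : ℝ) (hαstar : αstar = 1 - surv μ γ σ pstar sα)
    (αss : ℝ) (hαss : αss = 1 - surv μ γ σ pss sα)
    (hspos : 0 < surv μ γ σ pstar sα) (hsspos : 0 < surv μ γ σ pss sα)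
    (hintp : ∀ j ≤ 2, IntegrableOn (fun s => s ^ j * mixdens μ γ σ p s) (Set.Ioi sα)) :
    tailmom μ γ σ p 2 sα
      = μ ^ 2
        + cstar * (1 - αstar) / (1 - α) *
          (σ ^ 2 + 2 * μ * γ
            + σ ^ 2 * (sα + μ) * (mixdens μ γ σ pstar sα / surv μ γ σ pstar sα))
        + css * (1 - αss) / (1 - α) *
          (γ ^ 2 + γ * σ ^ 2 * (mixdens μ γ σ pss sα / surv μ γ σ pss sα)) := by
  have hα1 : (0:ℝ) < 1 - α := by have := hα01.2; linarith
  -- integrability of the weights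
  have hp_int : IntegrableOn p (Set.Ioi (0:ℝ)) := by
    by_contra h
    rw [integral_undef h] at hp1
    exact one_ne_zero hp1.symm
  have hθp_int : IntegrableOn (fun θ => θ * p θ) (Set.Ioi (0:ℝ)) := by
    by_contra h
    rw [integral_undef h] at hcstar
    exact hcpos.ne' hcstar
  have hθ2p_int : IntegrableOn (fun θ => θ ^ 2 * p θ) (Set.Ioi (0:ℝ)) := by
    by_contra h
    rw [integral_undef h] at hcss
    exact hcsspos.ne' hcss
  have hps_int : IntegrableOn pstar (Set.Ioi (0:ℝ)) := by
    rw [hpstar]; exact hθp_int.div_const cstar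
  have hss_int : IntegrableOn pss (Set.Ioi (0:ℝ)) := by
    rw [hpss]; exact hθ2p_int.div_const css
  have hps0 : ∀ θ ∈ Set.Ioi (0:ℝ), 0 ≤ pstar θ := by
    intro θ hθ
    have hθ' : (0:ℝ) < θ := hθ
    rw [hpstar]
    have := hp0 θ
    positivity
  have hss0 : ∀ θ ∈ Set.Ioi (0:ℝ), 0 ≤ pss θ := by
    intro θ hθ
    have hθ' : (0:ℝ) < θ := hθ
    rw [hpss]
    have := hp0 θ
    positivity
  -- measurability of the tail integral and the density at sα
  have hndsm : StronglyMeasurable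
      (Function.uncurry fun θ s : ℝ => ndens (μ + θ * γ) (θ * σ ^ 2) s) :=
    (measurable_ndens_pair μ γ σ).stronglyMeasurable
  have hT0meas : StronglyMeasurable
      fun θ : ℝ => ∫ s in Set.Ioi sα, ndens (μ + θ * γ) (θ * σ ^ 2) s :=
    hndsm.integral_prod_right
  have hNαmeas : Measurable fun θ : ℝ => ndens (μ + θ * γ) (θ * σ ^ 2) sα :=
    measurable_ndens_theta μ γ σ sα
  have hK0 : (0:ℝ) ≤ (Real.sqrt (2 * Real.pi))⁻¹ * σ⁻¹ := by positivity
  -- bounds on the tail integral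
  have hT0nn : ∀ θ ∈ Set.Ioi (0:ℝ),
      0 ≤ ∫ s in Set.Ioi sα, ndens (μ + θ * γ) (θ * σ ^ 2) s :=
    fun θ _ => tail0_nonneg _ _ _
  have hT0le : ∀ θ ∈ Set.Ioi (0:ℝ),
      (∫ s in Set.Ioi sα, ndens (μ + θ * γ) (θ * σ ^ 2) s) ≤ 1 := by
    intro θ hθ
    have hθ' : (0:ℝ) < θ := hθ
    exact tail0_le_one (by positivity) _ _
  -- the five integrable building blocks
  have hJ1 : IntegrableOn
      (fun θ => (∫ s in Set.Ioi sα, ndens (μ + θ * γ) (θ * σ ^ 2) s) * p θ)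
      (Set.Ioi (0:ℝ)) := by
    refine hp_int.mono' (hT0meas.aestronglyMeasurable.mul hp_int.aestronglyMeasurable) ?_
    filter_upwards [ae_restrict_mem measurableSet_Ioi] with θ hθ
    rw [Real.norm_of_nonneg (mul_nonneg (hT0nn θ hθ) (hp0 θ))]
    exact mul_le_of_le_one_left (hp0 θ) (hT0le θ hθ)
  have hJ1star : IntegrableOn
      (fun θ => (∫ s in Set.Ioi sα, ndens (μ + θ * γ) (θ * σ ^ 2) s) * pstar θ)
      (Set.Ioi (0:ℝ)) := by
    refine hps_int.mono' (hT0meas.aestronglyMeasurable.mul hps_int.aestronglyMeasurable) ?_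
    filter_upwards [ae_restrict_mem measurableSet_Ioi] with θ hθ
    rw [Real.norm_of_nonneg (mul_nonneg (hT0nn θ hθ) (hps0 θ hθ))]
    exact mul_le_of_le_one_left (hps0 θ hθ) (hT0le θ hθ)
  have hJ1ss : IntegrableOn
      (fun θ => (∫ s in Set.Ioi sα, ndens (μ + θ * γ) (θ * σ ^ 2) s) * pss θ)
      (Set.Ioi (0:ℝ)) := by
    refine hss_int.mono' (hT0meas.aestronglyMeasurable.mul hss_int.aestronglyMeasurable) ?_
    filter_upwards [ae_restrict_mem measurableSet_Ioi] with θ hθ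
    rw [Real.norm_of_nonneg (mul_nonneg (hT0nn θ hθ) (hss0 θ hθ))]
    exact mul_le_of_le_one_left (hss0 θ hθ) (hT0le θ hθ)
  have hJ2 : IntegrableOn
      (fun θ => θ * ((∫ s in Set.Ioi sα, ndens (μ + θ * γ) (θ * σ ^ 2) s) * p θ))
      (Set.Ioi (0:ℝ)) := by
    refine hθp_int.mono' (measurable_id.aestronglyMeasurable.mul
      (hT0meas.aestronglyMeasurable.mul hp_int.aestronglyMeasurable)) ?_
    filter_upwards [ae_restrict_mem measurableSet_Ioi] with θ hθ
    have hθ' : (0:ℝ) < θ := hθ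
    rw [Real.norm_of_nonneg (mul_nonneg hθ'.le (mul_nonneg (hT0nn θ hθ) (hp0 θ)))]
    exact mul_le_mul_of_nonneg_left
      (mul_le_of_le_one_left (hp0 θ) (hT0le θ hθ)) hθ'.le
  have hJ3 : IntegrableOn
      (fun θ => θ ^ 2 * ((∫ s in Set.Ioi sα, ndens (μ + θ * γ) (θ * σ ^ 2) s) * p θ))
      (Set.Ioi (0:ℝ)) := by
    refine hθ2p_int.mono' ((measurable_id.pow_const 2).aestronglyMeasurable.mul
      (hT0meas.aestronglyMeasurable.mul hp_int.aestronglyMeasurable)) ?_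
    filter_upwards [ae_restrict_mem measurableSet_Ioi] with θ hθ
    have hθ' : (0:ℝ) < θ := hθ
    rw [Real.norm_of_nonneg (mul_nonneg (by positivity) (mul_nonneg (hT0nn θ hθ) (hp0 θ)))]
    exact mul_le_mul_of_nonneg_left
      (mul_le_of_le_one_left (hp0 θ) (hT0le θ hθ)) (by positivity)
  have hJ4 : IntegrableOn
      (fun θ => θ * (ndens (μ + θ * γ) (θ * σ ^ 2) sα * p θ))
      (Set.Ioi (0:ℝ)) := by
    have hg : IntegrableOn
        (fun θ => ((Real.sqrt (2 * Real.pi))⁻¹ * σ⁻¹) * ((1 + θ) * p θ))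
        (Set.Ioi (0:ℝ)) := by
      refine ((hp_int.add hθp_int).const_mul ((Real.sqrt (2 * Real.pi))⁻¹ * σ⁻¹)).congr
        (ae_of_all _ fun θ => ?_)
      simp only [Pi.add_apply]
      ring
    refine hg.mono' (measurable_id.aestronglyMeasurable.mul
      (hNαmeas.aestronglyMeasurable.mul hp_int.aestronglyMeasurable)) ?_
    filter_upwards [ae_restrict_mem measurableSet_Ioi] with θ hθ
    have hθ' : (0:ℝ) < θ := hθ
    rw [Real.norm_of_nonneg (mul_nonneg hθ'.le
      (mul_nonneg (ndens_nonneg _ _ _) (hp0 θ)))]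
    have hb1 : θ * ndens (μ + θ * γ) (θ * σ ^ 2) sα
        ≤ ((Real.sqrt (2 * Real.pi))⁻¹ * σ⁻¹) * (1 + θ) :=
      calc θ * ndens (μ + θ * γ) (θ * σ ^ 2) sα
          ≤ θ * (((Real.sqrt (2 * Real.pi))⁻¹ * σ⁻¹) * (Real.sqrt θ)⁻¹) :=
            mul_le_mul_of_nonneg_left (ndens_theta_bound hσ _ _ hθ') hθ'.le
        _ = ((Real.sqrt (2 * Real.pi))⁻¹ * σ⁻¹) * (θ * (Real.sqrt θ)⁻¹) := by ring
        _ ≤ ((Real.sqrt (2 * Real.pi))⁻¹ * σ⁻¹) * (1 + θ) :=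
            mul_le_mul_of_nonneg_left (theta_mul_sqrt_inv_le1 hθ') hK0
    calc θ * (ndens (μ + θ * γ) (θ * σ ^ 2) sα * p θ)
        = (θ * ndens (μ + θ * γ) (θ * σ ^ 2) sα) * p θ := by ring
      _ ≤ (((Real.sqrt (2 * Real.pi))⁻¹ * σ⁻¹) * (1 + θ)) * p θ :=
          mul_le_mul_of_nonneg_right hb1 (hp0 θ)
      _ = ((Real.sqrt (2 * Real.pi))⁻¹ * σ⁻¹) * ((1 + θ) * p θ) := by ring
  have hJ5 : IntegrableOn
      (fun θ => θ ^ 2 * (ndens (μ + θ * γ) (θ * σ ^ 2) sα * p θ))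
      (Set.Ioi (0:ℝ)) := by
    have hg : IntegrableOn
        (fun θ => ((Real.sqrt (2 * Real.pi))⁻¹ * σ⁻¹) * ((θ + θ ^ 2) * p θ))
        (Set.Ioi (0:ℝ)) := by
      refine ((hθp_int.add hθ2p_int).const_mul ((Real.sqrt (2 * Real.pi))⁻¹ * σ⁻¹)).congr
        (ae_of_all _ fun θ => ?_)
      simp only [Pi.add_apply]
      ring
    refine hg.mono' ((measurable_id.pow_const 2).aestronglyMeasurable.mul
      (hNαmeas.aestronglyMeasurable.mul hp_int.aestronglyMeasurable)) ?_
    filter_upwards [ae_restrict_mem measurableSet_Ioi] with θ hθ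
    have hθ' : (0:ℝ) < θ := hθ
    rw [Real.norm_of_nonneg (mul_nonneg (by positivity)
      (mul_nonneg (ndens_nonneg _ _ _) (hp0 θ)))]
    have hb1 : θ ^ 2 * ndens (μ + θ * γ) (θ * σ ^ 2) sα
        ≤ ((Real.sqrt (2 * Real.pi))⁻¹ * σ⁻¹) * (θ + θ ^ 2) :=
      calc θ ^ 2 * ndens (μ + θ * γ) (θ * σ ^ 2) sα
          ≤ θ ^ 2 * (((Real.sqrt (2 * Real.pi))⁻¹ * σ⁻¹) * (Real.sqrt θ)⁻¹) :=
            mul_le_mul_of_nonneg_left (ndens_theta_bound hσ _ _ hθ') (by positivity)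
        _ = ((Real.sqrt (2 * Real.pi))⁻¹ * σ⁻¹) * (θ ^ 2 * (Real.sqrt θ)⁻¹) := by ring
        _ ≤ ((Real.sqrt (2 * Real.pi))⁻¹ * σ⁻¹) * (θ + θ ^ 2) :=
            mul_le_mul_of_nonneg_left (theta_mul_sqrt_inv_le2 hθ') hK0
    calc θ ^ 2 * (ndens (μ + θ * γ) (θ * σ ^ 2) sα * p θ)
        = (θ ^ 2 * ndens (μ + θ * γ) (θ * σ ^ 2) sα) * p θ := by ring
      _ ≤ (((Real.sqrt (2 * Real.pi))⁻¹ * σ⁻¹) * (θ + θ ^ 2)) * p θ :=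
          mul_le_mul_of_nonneg_right hb1 (hp0 θ)
      _ = ((Real.sqrt (2 * Real.pi))⁻¹ * σ⁻¹) * ((θ + θ ^ 2) * p θ) := by ring
  -- Fubini for the survival functions
  have hs_p : surv μ γ σ p sα
      = ∫ θ in Set.Ioi (0:ℝ),
          (∫ s in Set.Ioi sα, ndens (μ + θ * γ) (θ * σ ^ 2) s) * p θ := by
    have h := swap_key μ γ σ sα hσ 0 (fun s => by simp) p (fun θ _ => hp0 θ)
      hp_int.aestronglyMeasurable (by simpa using hJ1)
    simp only [pow_zero, one_mul] at h
    exact h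
  have hs_star : surv μ γ σ pstar sα
      = ∫ θ in Set.Ioi (0:ℝ),
          (∫ s in Set.Ioi sα, ndens (μ + θ * γ) (θ * σ ^ 2) s) * pstar θ := by
    have h := swap_key μ γ σ sα hσ 0 (fun s => by simp) pstar hps0
      hps_int.aestronglyMeasurable (by simpa using hJ1star)
    simp only [pow_zero, one_mul] at h
    exact h
  have hs_ss : surv μ γ σ pss sα
      = ∫ θ in Set.Ioi (0:ℝ),
          (∫ s in Set.Ioi sα, ndens (μ + θ * γ) (θ * σ ^ 2) s) * pss θ := by
    have h := swap_key μ γ σ sα hσ 0 (fun s => by simp) pss hss0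
      hss_int.aestronglyMeasurable (by simpa using hJ1ss)
    simp only [pow_zero, one_mul] at h
    exact h
  -- the pointwise tail identity and joint integrability for k = 2
  have hEq : Set.EqOn
      (fun θ => μ ^ 2 * ((∫ s in Set.Ioi sα, ndens (μ + θ * γ) (θ * σ ^ 2) s) * p θ)
        + (2 * μ * γ + σ ^ 2)
            * (θ * ((∫ s in Set.Ioi sα, ndens (μ + θ * γ) (θ * σ ^ 2) s) * p θ))
        + γ ^ 2 * (θ ^ 2 * ((∫ s in Set.Ioi sα, ndens (μ + θ * γ) (θ * σ ^ 2) s) * p θ))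
        + σ ^ 2 * (sα + μ) * (θ * (ndens (μ + θ * γ) (θ * σ ^ 2) sα * p θ))
        + σ ^ 2 * γ * (θ ^ 2 * (ndens (μ + θ * γ) (θ * σ ^ 2) sα * p θ)))
      (fun θ => (∫ s in Set.Ioi sα, s ^ 2 * ndens (μ + θ * γ) (θ * σ ^ 2) s) * p θ)
      (Set.Ioi (0:ℝ)) := by
    intro θ hθ
    have hθ' : (0:ℝ) < θ := hθ
    have hv : 0 < θ * σ ^ 2 := by positivity
    have ht := tail2_eq hv (μ + θ * γ) sα
    simp only
    rw [ht]
    ring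
  have hJsum : IntegrableOn
      (fun θ => μ ^ 2 * ((∫ s in Set.Ioi sα, ndens (μ + θ * γ) (θ * σ ^ 2) s) * p θ)
        + (2 * μ * γ + σ ^ 2)
            * (θ * ((∫ s in Set.Ioi sα, ndens (μ + θ * γ) (θ * σ ^ 2) s) * p θ))
        + γ ^ 2 * (θ ^ 2 * ((∫ s in Set.Ioi sα, ndens (μ + θ * γ) (θ * σ ^ 2) s) * p θ))
        + σ ^ 2 * (sα + μ) * (θ * (ndens (μ + θ * γ) (θ * σ ^ 2) sα * p θ))
        + σ ^ 2 * γ * (θ ^ 2 * (ndens (μ + θ * γ) (θ * σ ^ 2) sα * p θ)))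
      (Set.Ioi (0:ℝ)) :=
    ((((hJ1.const_mul (μ ^ 2)).add (hJ2.const_mul (2 * μ * γ + σ ^ 2))).add
      (hJ3.const_mul (γ ^ 2))).add (hJ4.const_mul (σ ^ 2 * (sα + μ)))).add
      (hJ5.const_mul (σ ^ 2 * γ))
  have hb2 : IntegrableOn
      (fun θ => (∫ s in Set.Ioi sα, s ^ 2 * ndens (μ + θ * γ) (θ * σ ^ 2) s) * p θ)
      (Set.Ioi (0:ℝ)) := hJsum.congr_fun hEq measurableSet_Ioi
  have hswap2 := swap_key μ γ σ sα hσ 2 (fun s => sq_nonneg s) p (fun θ _ => hp0 θ)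
    hp_int.aestronglyMeasurable hb2
  have h5a : (∫ θ in Set.Ioi (0:ℝ),
        (∫ s in Set.Ioi sα, s ^ 2 * ndens (μ + θ * γ) (θ * σ ^ 2) s) * p θ)
      = ∫ θ in Set.Ioi (0:ℝ),
          (μ ^ 2 * ((∫ s in Set.Ioi sα, ndens (μ + θ * γ) (θ * σ ^ 2) s) * p θ)
          + (2 * μ * γ + σ ^ 2)
              * (θ * ((∫ s in Set.Ioi sα, ndens (μ + θ * γ) (θ * σ ^ 2) s) * p θ))
          + γ ^ 2 * (θ ^ 2 * ((∫ s in Set.Ioi sα, ndens (μ + θ * γ) (θ * σ ^ 2) s) * p θ))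
          + σ ^ 2 * (sα + μ) * (θ * (ndens (μ + θ * γ) (θ * σ ^ 2) sα * p θ))
          + σ ^ 2 * γ * (θ ^ 2 * (ndens (μ + θ * γ) (θ * σ ^ 2) sα * p θ))) :=
    (setIntegral_congr_fun measurableSet_Ioi hEq).symm
  have h5b : (∫ θ in Set.Ioi (0:ℝ),
        (μ ^ 2 * ((∫ s in Set.Ioi sα, ndens (μ + θ * γ) (θ * σ ^ 2) s) * p θ)
        + (2 * μ * γ + σ ^ 2)
            * (θ * ((∫ s in Set.Ioi sα, ndens (μ + θ * γ) (θ * σ ^ 2) s) * p θ))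
        + γ ^ 2 * (θ ^ 2 * ((∫ s in Set.Ioi sα, ndens (μ + θ * γ) (θ * σ ^ 2) s) * p θ))
        + σ ^ 2 * (sα + μ) * (θ * (ndens (μ + θ * γ) (θ * σ ^ 2) sα * p θ))
        + σ ^ 2 * γ * (θ ^ 2 * (ndens (μ + θ * γ) (θ * σ ^ 2) sα * p θ))))
      = μ ^ 2 * (∫ θ in Set.Ioi (0:ℝ),
            (∫ s in Set.Ioi sα, ndens (μ + θ * γ) (θ * σ ^ 2) s) * p θ)
        + (2 * μ * γ + σ ^ 2) * (∫ θ in Set.Ioi (0:ℝ),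
            θ * ((∫ s in Set.Ioi sα, ndens (μ + θ * γ) (θ * σ ^ 2) s) * p θ))
        + γ ^ 2 * (∫ θ in Set.Ioi (0:ℝ),
            θ ^ 2 * ((∫ s in Set.Ioi sα, ndens (μ + θ * γ) (θ * σ ^ 2) s) * p θ))
        + σ ^ 2 * (sα + μ) * (∫ θ in Set.Ioi (0:ℝ),
            θ * (ndens (μ + θ * γ) (θ * σ ^ 2) sα * p θ))
        + σ ^ 2 * γ * (∫ θ in Set.Ioi (0:ℝ),
            θ ^ 2 * (ndens (μ + θ * γ) (θ * σ ^ 2) sα * p θ)) := by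
    have hT1 := hJ1.const_mul (μ ^ 2)
    have hT2 := hJ2.const_mul (2 * μ * γ + σ ^ 2)
    have hT3 := hJ3.const_mul (γ ^ 2)
    have hT4 := hJ4.const_mul (σ ^ 2 * (sα + μ))
    have hT5 := hJ5.const_mul (σ ^ 2 * γ)
    have s5 : (∫ θ in Set.Ioi (0:ℝ),
          (μ ^ 2 * ((∫ s in Set.Ioi sα, ndens (μ + θ * γ) (θ * σ ^ 2) s) * p θ)
          + (2 * μ * γ + σ ^ 2)
              * (θ * ((∫ s in Set.Ioi sα, ndens (μ + θ * γ) (θ * σ ^ 2) s) * p θ))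
          + γ ^ 2 * (θ ^ 2 * ((∫ s in Set.Ioi sα, ndens (μ + θ * γ) (θ * σ ^ 2) s) * p θ))
          + σ ^ 2 * (sα + μ) * (θ * (ndens (μ + θ * γ) (θ * σ ^ 2) sα * p θ))
          + σ ^ 2 * γ * (θ ^ 2 * (ndens (μ + θ * γ) (θ * σ ^ 2) sα * p θ))))
        = (∫ θ in Set.Ioi (0:ℝ),
          (μ ^ 2 * ((∫ s in Set.Ioi sα, ndens (μ + θ * γ) (θ * σ ^ 2) s) * p θ)
          + (2 * μ * γ + σ ^ 2)
              * (θ * ((∫ s in Set.Ioi sα, ndens (μ + θ * γ) (θ * σ ^ 2) s) * p θ))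
          + γ ^ 2 * (θ ^ 2 * ((∫ s in Set.Ioi sα, ndens (μ + θ * γ) (θ * σ ^ 2) s) * p θ))
          + σ ^ 2 * (sα + μ) * (θ * (ndens (μ + θ * γ) (θ * σ ^ 2) sα * p θ))))
          + ∫ θ in Set.Ioi (0:ℝ),
              σ ^ 2 * γ * (θ ^ 2 * (ndens (μ + θ * γ) (θ * σ ^ 2) sα * p θ)) :=
      integral_add (((hT1.add hT2).add hT3).add hT4) hT5
    have s4 : (∫ θ in Set.Ioi (0:ℝ),
          (μ ^ 2 * ((∫ s in Set.Ioi sα, ndens (μ + θ * γ) (θ * σ ^ 2) s) * p θ)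
          + (2 * μ * γ + σ ^ 2)
              * (θ * ((∫ s in Set.Ioi sα, ndens (μ + θ * γ) (θ * σ ^ 2) s) * p θ))
          + γ ^ 2 * (θ ^ 2 * ((∫ s in Set.Ioi sα, ndens (μ + θ * γ) (θ * σ ^ 2) s) * p θ))
          + σ ^ 2 * (sα + μ) * (θ * (ndens (μ + θ * γ) (θ * σ ^ 2) sα * p θ))))
        = (∫ θ in Set.Ioi (0:ℝ),
          (μ ^ 2 * ((∫ s in Set.Ioi sα, ndens (μ + θ * γ) (θ * σ ^ 2) s) * p θ)
          + (2 * μ * γ + σ ^ 2)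
              * (θ * ((∫ s in Set.Ioi sα, ndens (μ + θ * γ) (θ * σ ^ 2) s) * p θ))
          + γ ^ 2 * (θ ^ 2 * ((∫ s in Set.Ioi sα, ndens (μ + θ * γ) (θ * σ ^ 2) s) * p θ))))
          + ∫ θ in Set.Ioi (0:ℝ),
              σ ^ 2 * (sα + μ) * (θ * (ndens (μ + θ * γ) (θ * σ ^ 2) sα * p θ)) :=
      integral_add ((hT1.add hT2).add hT3) hT4
    have s3 : (∫ θ in Set.Ioi (0:ℝ),
          (μ ^ 2 * ((∫ s in Set.Ioi sα, ndens (μ + θ * γ) (θ * σ ^ 2) s) * p θ)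
          + (2 * μ * γ + σ ^ 2)
              * (θ * ((∫ s in Set.Ioi sα, ndens (μ + θ * γ) (θ * σ ^ 2) s) * p θ))
          + γ ^ 2 * (θ ^ 2 * ((∫ s in Set.Ioi sα, ndens (μ + θ * γ) (θ * σ ^ 2) s) * p θ))))
        = (∫ θ in Set.Ioi (0:ℝ),
          (μ ^ 2 * ((∫ s in Set.Ioi sα, ndens (μ + θ * γ) (θ * σ ^ 2) s) * p θ)
          + (2 * μ * γ + σ ^ 2)
              * (θ * ((∫ s in Set.Ioi sα, ndens (μ + θ * γ) (θ * σ ^ 2) s) * p θ))))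
          + ∫ θ in Set.Ioi (0:ℝ),
              γ ^ 2 * (θ ^ 2 * ((∫ s in Set.Ioi sα, ndens (μ + θ * γ) (θ * σ ^ 2) s) * p θ)) :=
      integral_add (hT1.add hT2) hT3
    have s2 : (∫ θ in Set.Ioi (0:ℝ),
          (μ ^ 2 * ((∫ s in Set.Ioi sα, ndens (μ + θ * γ) (θ * σ ^ 2) s) * p θ)
          + (2 * μ * γ + σ ^ 2)
              * (θ * ((∫ s in Set.Ioi sα, ndens (μ + θ * γ) (θ * σ ^ 2) s) * p θ))))
        = (∫ θ in Set.Ioi (0:ℝ),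
            μ ^ 2 * ((∫ s in Set.Ioi sα, ndens (μ + θ * γ) (θ * σ ^ 2) s) * p θ))
          + ∫ θ in Set.Ioi (0:ℝ),
              (2 * μ * γ + σ ^ 2)
                * (θ * ((∫ s in Set.Ioi sα, ndens (μ + θ * γ) (θ * σ ^ 2) s) * p θ)) :=
      integral_add hT1 hT2
    have m1 : (∫ θ in Set.Ioi (0:ℝ),
          μ ^ 2 * ((∫ s in Set.Ioi sα, ndens (μ + θ * γ) (θ * σ ^ 2) s) * p θ))
        = μ ^ 2 * ∫ θ in Set.Ioi (0:ℝ),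
            (∫ s in Set.Ioi sα, ndens (μ + θ * γ) (θ * σ ^ 2) s) * p θ :=
      integral_const_mul _ _
    have m2 : (∫ θ in Set.Ioi (0:ℝ),
          (2 * μ * γ + σ ^ 2)
            * (θ * ((∫ s in Set.Ioi sα, ndens (μ + θ * γ) (θ * σ ^ 2) s) * p θ)))
        = (2 * μ * γ + σ ^ 2) * ∫ θ in Set.Ioi (0:ℝ),
            θ * ((∫ s in Set.Ioi sα, ndens (μ + θ * γ) (θ * σ ^ 2) s) * p θ) :=
      integral_const_mul _ _
    have m3 : (∫ θ in Set.Ioi (0:ℝ),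
          γ ^ 2 * (θ ^ 2 * ((∫ s in Set.Ioi sα, ndens (μ + θ * γ) (θ * σ ^ 2) s) * p θ)))
        = γ ^ 2 * ∫ θ in Set.Ioi (0:ℝ),
            θ ^ 2 * ((∫ s in Set.Ioi sα, ndens (μ + θ * γ) (θ * σ ^ 2) s) * p θ) :=
      integral_const_mul _ _
    have m4 : (∫ θ in Set.Ioi (0:ℝ),
          σ ^ 2 * (sα + μ) * (θ * (ndens (μ + θ * γ) (θ * σ ^ 2) sα * p θ)))
        = σ ^ 2 * (sα + μ) * ∫ θ in Set.Ioi (0:ℝ),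
            θ * (ndens (μ + θ * γ) (θ * σ ^ 2) sα * p θ) :=
      integral_const_mul _ _
    have m5 : (∫ θ in Set.Ioi (0:ℝ),
          σ ^ 2 * γ * (θ ^ 2 * (ndens (μ + θ * γ) (θ * σ ^ 2) sα * p θ)))
        = σ ^ 2 * γ * ∫ θ in Set.Ioi (0:ℝ),
            θ ^ 2 * (ndens (μ + θ * γ) (θ * σ ^ 2) sα * p θ) :=
      integral_const_mul _ _
    linear_combination s5 + s4 + s3 + s2 + m1 + m2 + m3 + m4 + m5
  -- identify the integrals with the size-biased quantities
  have hA1 : (∫ θ in Set.Ioi (0:ℝ),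
      (∫ s in Set.Ioi sα, ndens (μ + θ * γ) (θ * σ ^ 2) s) * p θ) = 1 - α := by
    rw [← hs_p]; exact hquant
  have hA2 : (∫ θ in Set.Ioi (0:ℝ),
      θ * ((∫ s in Set.Ioi sα, ndens (μ + θ * γ) (θ * σ ^ 2) s) * p θ))
      = cstar * surv μ γ σ pstar sα := by
    rw [hs_star, ← integral_const_mul]
    refine setIntegral_congr_fun measurableSet_Ioi fun θ hθ => ?_
    simp only [hpstar]
    field_simp
  have hA3 : (∫ θ in Set.Ioi (0:ℝ),
      θ ^ 2 * ((∫ s in Set.Ioi sα, ndens (μ + θ * γ) (θ * σ ^ 2) s) * p θ))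
      = css * surv μ γ σ pss sα := by
    rw [hs_ss, ← integral_const_mul]
    refine setIntegral_congr_fun measurableSet_Ioi fun θ hθ => ?_
    simp only [hpss]
    field_simp
  have hA4 : (∫ θ in Set.Ioi (0:ℝ),
      θ * (ndens (μ + θ * γ) (θ * σ ^ 2) sα * p θ))
      = cstar * mixdens μ γ σ pstar sα := by
    have hm : mixdens μ γ σ pstar sα
        = ∫ θ in Set.Ioi (0:ℝ), ndens (μ + θ * γ) (θ * σ ^ 2) sα * pstar θ := rfl
    rw [hm, ← integral_const_mul]
    refine setIntegral_congr_fun measurableSet_Ioi fun θ hθ => ?_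
    simp only [hpstar]
    field_simp
  have hA5 : (∫ θ in Set.Ioi (0:ℝ),
      θ ^ 2 * (ndens (μ + θ * γ) (θ * σ ^ 2) sα * p θ))
      = css * mixdens μ γ σ pss sα := by
    have hm : mixdens μ γ σ pss sα
        = ∫ θ in Set.Ioi (0:ℝ), ndens (μ + θ * γ) (θ * σ ^ 2) sα * pss θ := rfl
    rw [hm, ← integral_const_mul]
    refine setIntegral_congr_fun measurableSet_Ioi fun θ hθ => ?_
    simp only [hpss]
    field_simp
  -- put everything together
  have e1 : surv μ γ σ pstar sα = 1 - αstar := by rw [hαstar]; ring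
  have e2 : surv μ γ σ pss sα = 1 - αss := by rw [hαss]; ring
  have htm : tailmom μ γ σ p 2 sα
      = (surv μ γ σ p sα)⁻¹ * ∫ s in Set.Ioi sα, s ^ 2 * mixdens μ γ σ p s := rfl
  rw [htm, hquant, hswap2, h5a, h5b, hA1, hA2, hA3, hA4, hA5, ← e1, ← e2]
  field_simp
  ring
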